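/- Let n ≥ 1, let U ⊆ ℝⁿ be open, let f : U → ℝ be a C² function and let u : U → ℝ be a C³ function. Then at every point of U, div(u·(Hess u)·∇f) = u·⟨∇(Δu), ∇f⟩ + u·⟨Hess u, Hess f⟩_F + (1/2)·⟨∇(|∇u|²), ∇f⟩. -/

import Mathlib

open scoped BigOperators

/-- Partial derivative `∂ᵢ v` of a scalar function on `ℝⁿ = Fin n → ℝ`. -/
noncomputable def pd {n : ℕ} (i : Fin n) (v : (Fin n → ℝ) → ℝ) (x : Fin n → ℝ) : ℝ :=
  fderiv ℝ v x (Pi.single i 1)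

/-- Gradient `∇v`. -/
noncomputable def grad {n : ℕ} (v : (Fin n → ℝ) → ℝ) (x : Fin n → ℝ) : Fin n → ℝ :=
  fun i => pd i v x

/-- Hessian matrix `(∂ᵢ∂ⱼ v)ᵢⱼ`. -/
noncomputable def hess {n : ℕ} (v : (Fin n → ℝ) → ℝ) (x : Fin n → ℝ) :
    Matrix (Fin n) (Fin n) ℝ :=
  fun i j => pd i (fun y => pd j v y) x

/-- Laplacian `Δv = tr (Hess v)`. -/
noncomputable def lap {n : ℕ} (v : (Fin n → ℝ) → ℝ) (x : Fin n → ℝ) : ℝ :=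
  ∑ i, hess v x i i

/-- Divergence of a vector field. -/
noncomputable def divg {n : ℕ} (X : (Fin n → ℝ) → (Fin n → ℝ)) (x : Fin n → ℝ) : ℝ :=
  ∑ i, pd i (fun y => X y i) x

/-- Euclidean inner product. -/
def dotp {n : ℕ} (a b : Fin n → ℝ) : ℝ := ∑ i, a i * b i

/-- Frobenius inner product of matrices. -/
def frobInner {n : ℕ} (A B : Matrix (Fin n) (Fin n) ℝ) : ℝ := ∑ i, ∑ j, A i j * B i j

/-- Squared Frobenius norm of a matrix. -/
def frobSq {n : ℕ} (A : Matrix (Fin n) (Fin n) ℝ) : ℝ := ∑ i, ∑ j, (A i j) ^ 2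

lemma pd_congr {n : ℕ} {v w : (Fin n → ℝ) → ℝ} {x : Fin n → ℝ}
    (h : v =ᶠ[nhds x] w) (i : Fin n) : pd i v x = pd i w x := by
  unfold pd; rw [h.fderiv_eq]

lemma pd_contDiffAt {n k : ℕ} {v : (Fin n → ℝ) → ℝ} {x : Fin n → ℝ}
    (h : ContDiffAt ℝ (k + 1) v x) (j : Fin n) :
    ContDiffAt ℝ k (fun y => pd j v y) x := by
  have h1 : ContDiffAt ℝ k (fderiv ℝ v) x := h.fderiv_right (by norm_cast)
  exact ((ContinuousLinearMap.apply ℝ ℝ (Pi.single j (1:ℝ))).contDiff.contDiffAt).comp x h1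

lemma pd_mul {n : ℕ} {a b : (Fin n → ℝ) → ℝ} {x : Fin n → ℝ}
    (ha : DifferentiableAt ℝ a x) (hb : DifferentiableAt ℝ b x) (i : Fin n) :
    pd i (fun y => a y * b y) x = pd i a x * b x + a x * pd i b x := by
  unfold pd
  rw [fderiv_fun_mul ha hb]
  simp [mul_comm]
  ring

lemma pd_sum {n : ℕ} {ι : Type*} (s : Finset ι) {g : ι → (Fin n → ℝ) → ℝ} {x : Fin n → ℝ}
    (hg : ∀ j ∈ s, DifferentiableAt ℝ (g j) x) (i : Fin n) :
    pd i (fun y => ∑ j ∈ s, g j y) x = ∑ j ∈ s, pd i (g j) x := by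
  unfold pd
  rw [fderiv_fun_sum hg]
  simp

lemma pd_pd_eq {n : ℕ} {v : (Fin n → ℝ) → ℝ} {x : Fin n → ℝ}
    (h : DifferentiableAt ℝ (fderiv ℝ v) x) (i j : Fin n) :
    pd i (fun y => pd j v y) x = fderiv ℝ (fderiv ℝ v) x (Pi.single i 1) (Pi.single j 1) := by
  unfold pd
  have := fderiv_clm_apply (c := fderiv ℝ v) (u := fun _ => Pi.single j (1:ℝ)) h
    (differentiableAt_const _)
  rw [this]
  simp

lemma pd_comm {n : ℕ} {v : (Fin n → ℝ) → ℝ} {x : Fin n → ℝ}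
    (h : ContDiffAt ℝ 2 v x) (i j : Fin n) :
    pd i (fun y => pd j v y) x = pd j (fun y => pd i v y) x := by
  have hd : DifferentiableAt ℝ (fderiv ℝ v) x :=
    (h.fderiv_right (m := 1) (by norm_num)).differentiableAt (by norm_num)
  rw [pd_pd_eq hd, pd_pd_eq hd]
  exact (h.isSymmSndFDerivAt (by simp [minSmoothness_of_isRCLikeNormedField])) _ _

lemma key_sum {n : ℕ} (P F : Fin n → ℝ) (H G T : Fin n → Fin n → ℝ) (c : ℝ) :
    ∑ i, (P i * (∑ j, H i j * F j) + c * (∑ j, (T i j * F j + H i j * G i j)))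
      = c * ∑ j, (∑ i, T i j) * F j + c * (∑ i, ∑ j, H i j * G i j)
        + (1/2) * ∑ j, (∑ i, 2 * (P i * H i j)) * F j := by
  have e1 : ∑ i, (P i * (∑ j, H i j * F j) + c * (∑ j, (T i j * F j + H i j * G i j)))
      = ∑ i, ∑ j, (P i * (H i j * F j) + (c * (T i j * F j) + c * (H i j * G i j))) := by
    refine Finset.sum_congr rfl fun i _ => ?_
    rw [Finset.mul_sum, Finset.mul_sum, ← Finset.sum_add_distrib]
    exact Finset.sum_congr rfl fun j _ => by ring
  have e2 : c * ∑ j, (∑ i, T i j) * F j = ∑ i, ∑ j, c * (T i j * F j) := by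
    rw [Finset.mul_sum]
    rw [show (∑ j, c * ((∑ i, T i j) * F j)) = ∑ j, ∑ i, c * (T i j * F j) from
      Finset.sum_congr rfl fun j _ => by
        rw [Finset.sum_mul, Finset.mul_sum]]
    exact Finset.sum_comm
  have e3 : (1/2 : ℝ) * ∑ j, (∑ i, 2 * (P i * H i j)) * F j
      = ∑ i, ∑ j, P i * (H i j * F j) := by
    rw [Finset.mul_sum]
    rw [show (∑ j, (1/2 : ℝ) * ((∑ i, 2 * (P i * H i j)) * F j))
        = ∑ j, ∑ i, P i * (H i j * F j) from
      Finset.sum_congr rfl fun j _ => by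
        rw [Finset.sum_mul, Finset.mul_sum]
        exact Finset.sum_congr rfl fun i _ => by ring]
    exact Finset.sum_comm
  have e4 : c * (∑ i, ∑ j, H i j * G i j) = ∑ i, ∑ j, c * (H i j * G i j) := by
    rw [Finset.mul_sum]
    exact Finset.sum_congr rfl fun i _ => by rw [Finset.mul_sum]
  rw [e1, e2, e3, e4, ← Finset.sum_add_distrib, ← Finset.sum_add_distrib]
  refine Finset.sum_congr rfl fun i _ => ?_
  rw [← Finset.sum_add_distrib, ← Finset.sum_add_distrib]
  refine Finset.sum_congr rfl fun j _ => ?_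
  ring

theorem stmt8 {n : ℕ} (hn : 1 ≤ n) {U : Set (Fin n → ℝ)} (hU : IsOpen U)
    (f u : (Fin n → ℝ) → ℝ)
    (hf : ContDiffOn ℝ 2 f U) (hu : ContDiffOn ℝ 3 u U) :
    ∀ x ∈ U,
      divg (fun y => u y • ((hess u y).mulVec (grad f y))) x =
        u x * dotp (grad (fun y => lap u y) x) (grad f x)
        + u x * frobInner (hess u x) (hess f x)
        + (1 / 2) * dotp (grad (fun y => dotp (grad u y) (grad u y)) x) (grad f x) := by
  intro x hx
  have hUx : U ∈ nhds x := hU.mem_nhds hx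
  have huAt : ∀ y ∈ U, ContDiffAt ℝ 3 u y := fun y hy => (hu y hy).contDiffAt (hU.mem_nhds hy)
  have hfAt : ∀ y ∈ U, ContDiffAt ℝ 2 f y := fun y hy => (hf y hy).contDiffAt (hU.mem_nhds hy)
  have hu2 : ∀ y ∈ U, ∀ j, ContDiffAt ℝ 2 (fun z => pd j u z) y := by
    intro y hy j
    have := pd_contDiffAt (k := 2) (v := u) (x := y) (by exact_mod_cast huAt y hy) j
    exact_mod_cast this
  have hu1 : ∀ i j, ContDiffAt ℝ 1 (fun z => pd i (fun w => pd j u w) z) x := by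
    intro i j
    have := pd_contDiffAt (k := 1) (v := fun z => pd j u z) (x := x)
      (by exact_mod_cast hu2 x hx j) i
    exact_mod_cast this
  have hf1 : ∀ j, ContDiffAt ℝ 1 (fun z => pd j f z) x := by
    intro j
    have := pd_contDiffAt (k := 1) (v := f) (x := x) (by exact_mod_cast hfAt x hx) j
    exact_mod_cast this
  have d_u : DifferentiableAt ℝ u x := (huAt x hx).differentiableAt (by norm_num)
  have d_pu : ∀ j, DifferentiableAt ℝ (fun z => pd j u z) x := fun j =>
    (hu2 x hx j).differentiableAt (by norm_num)
  have d_h : ∀ i j, DifferentiableAt ℝ (fun z => pd i (fun w => pd j u w) z) x := fun i j =>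
    (hu1 i j).differentiableAt (by norm_num)
  have d_pf : ∀ j, DifferentiableAt ℝ (fun z => pd j f z) x := fun j =>
    (hf1 j).differentiableAt (by norm_num)
  -- Schwarz: second derivatives of u commute at x
  have hswap : ∀ i j, pd j (fun z => pd i u z) x = pd i (fun z => pd j u z) x := fun i j =>
    pd_comm (by exact_mod_cast (huAt x hx).of_le (by norm_num)) j i
  -- Schwarz for third derivatives
  have hswap3 : ∀ i j, pd j (fun y => pd i (fun z => pd i u z) y) x
      = pd i (fun y => pd i (fun z => pd j u z) y) x := by
    intro i j
    have e1 : pd i (fun y => pd i (fun z => pd j u z) y) x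
        = pd i (fun y => pd j (fun z => pd i u z) y) x := by
      apply pd_congr
      filter_upwards [hUx] with y hy
      exact pd_comm (by exact_mod_cast (huAt y hy).of_le (by norm_num)) i j
    rw [e1]
    exact pd_comm (by exact_mod_cast hu2 x hx i) j i
  -- LHS computation
  have eLHS : divg (fun y => u y • ((hess u y).mulVec (grad f y))) x
      = ∑ i, (pd i u x * (∑ j, pd i (fun z => pd j u z) x * pd j f x)
          + u x * (∑ j, (pd i (fun y => pd i (fun z => pd j u z) y) x * pd j f x
              + pd i (fun z => pd j u z) x * pd i (fun z => pd j f z) x))) := by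
    unfold divg
    refine Finset.sum_congr rfl fun i _ => ?_
    have ef : (fun y => (u y • ((hess u y).mulVec (grad f y))) i)
        = fun y => u y * ∑ j, pd i (fun z => pd j u z) y * pd j f y := by
      funext y
      simp [hess, grad, Matrix.mulVec, dotProduct]
    have d_S : DifferentiableAt ℝ (fun y => ∑ j, pd i (fun z => pd j u z) y * pd j f y) x :=
      DifferentiableAt.fun_sum (fun j _ => (d_h i j).mul (d_pf j))
    have hgd : ∀ j ∈ (Finset.univ : Finset (Fin n)),
        DifferentiableAt ℝ (fun y => pd i (fun z => pd j u z) y * pd j f y) x :=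
      fun j _ => (d_h i j).mul (d_pf j)
    rw [ef, pd_mul d_u d_S, pd_sum Finset.univ hgd i]
    congr 1
    rw [Finset.mul_sum, Finset.mul_sum]
    refine Finset.sum_congr rfl fun j _ => ?_
    rw [pd_mul (d_h i j) (d_pf j)]
  -- gradient of the Laplacian
  have eT1 : ∀ j, pd j (fun y => lap u y) x
      = ∑ i, pd i (fun y => pd i (fun z => pd j u z) y) x := by
    intro j
    have h0 : (fun y => lap u y) = fun y => ∑ i, pd i (fun z => pd i u z) y := rfl
    have hgd : ∀ i ∈ (Finset.univ : Finset (Fin n)),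
        DifferentiableAt ℝ (fun y => pd i (fun z => pd i u z) y) x := fun i _ => d_h i i
    rw [h0, pd_sum Finset.univ hgd j]
    exact Finset.sum_congr rfl fun i _ => hswap3 i j
  -- gradient of |∇u|²
  have eT3 : ∀ j, pd j (fun y => dotp (grad u y) (grad u y)) x
      = ∑ i, 2 * (pd i u x * pd i (fun z => pd j u z) x) := by
    intro j
    have h0 : (fun y => dotp (grad u y) (grad u y)) = fun y => ∑ i, pd i u y * pd i u y := rfl
    have hgd : ∀ i ∈ (Finset.univ : Finset (Fin n)),
        DifferentiableAt ℝ (fun y => pd i u y * pd i u y) x := fun i _ => (d_pu i).mul (d_pu i)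
    rw [h0, pd_sum Finset.univ hgd j]
    refine Finset.sum_congr rfl fun i _ => ?_
    rw [pd_mul (d_pu i) (d_pu i), hswap i j]
    ring
  -- assemble
  rw [eLHS]
  show _ = u x * (∑ j, pd j (fun y => lap u y) x * pd j f x)
      + u x * (∑ i, ∑ j, pd i (fun z => pd j u z) x * pd i (fun z => pd j f z) x)
      + (1/2) * (∑ j, pd j (fun y => dotp (grad u y) (grad u y)) x * pd j f x)
  simp only [eT1, eT3]
  exact key_sum (fun i => pd i u x) (fun j => pd j f x)
    (fun i j => pd i (fun z => pd j u z) x)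
    (fun i j => pd i (fun z => pd j f z) x)
    (fun i j => pd i (fun y => pd i (fun z => pd j u z) y) x) (u x)
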